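/- Let V be a finite-dimensional vector space over a field k of characteristic zero with a finite exhaustive increasing filtration W. Suppose there exists α ∈ k* which is not a root of unity and a filtration-preserving automorphism Φ of V such that the induced map on Gr^W V acts as multiplication by α^p on Gr^W_p V. Then setting V_p := Ker(Φ_s − α^p · id), where Φ_s is the semisimple part of Φ, one has V = ⊕_p V_p and W_p V = ⊕_{q ≤ p} V_q; in particular the filtration W splits. -/

import Mathlib

open Polynomial

section Aux

variable {k V : Type} [Field k] [AddCommGroup V] [Module k V]

/-- If `f v = μ • v` then `aeval f p v = p.eval μ • v`. -/
private lemma aeval_apply_of_eq_smul (f : Module.End k V) (μ : k) (v : V)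
    (hv : f v = μ • v) (p : k[X]) : Polynomial.aeval f p v = p.eval μ • v := by
  have hpow : ∀ n : ℕ, (f ^ n) v = μ ^ n • v := by
    intro n
    induction n with
    | zero => simp
    | succ n ih =>
      rw [pow_succ, Module.End.mul_apply, hv, map_smul, ih, smul_smul, pow_succ, mul_comm]
  induction p using Polynomial.induction_on' with
  | add p q hp hq => rw [map_add, LinearMap.add_apply, hp, hq, eval_add, add_smul]
  | monomial n a =>
    rw [aeval_monomial, Module.End.mul_apply, hpow, eval_monomial]
    simp [Module.algebraMap_end_eq_smul_id, smul_smul, mul_comm]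

/-- Kernel of `aeval f` of a product of distinct linear factors is contained in the sup of
the kernels of the factors. -/
private lemma mem_iSup_ker_of_prod_eq_zero (f : Module.End k V) (c : ℤ → k) :
    ∀ s : Finset ℤ, (∀ q ∈ s, ∀ r ∈ s, c q = c r → q = r) →
      ∀ x : V, Polynomial.aeval f (∏ q ∈ s, (X - C (c q))) x = 0 →
        x ∈ ⨆ q ∈ s, LinearMap.ker (f - c q • 1) := by
  classical
  intro s
  induction s using Finset.induction_on with
  | empty =>
    intro _ x hx
    simp only [Finset.prod_empty, map_one, Module.End.one_apply] at hx
    simp [hx]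
  | @insert r t hr ih =>
    intro hinj x hx
    rw [Finset.prod_insert hr, map_mul, Module.End.mul_apply] at hx
    set B : Module.End k V := Polynomial.aeval f (∏ q ∈ t, (X - C (c q))) with hB
    have haev1 : Polynomial.aeval f (X - C (c r)) = f - c r • 1 := by
      rw [map_sub, aeval_X, aeval_C, Module.algebraMap_end_eq_smul_id]
      rfl
    rw [haev1] at hx
    have hBx : f (B x) = c r • (B x) := by
      rw [LinearMap.sub_apply, LinearMap.smul_apply, Module.End.one_apply, sub_eq_zero] at hx
      exact hx
    set μ : k := ∏ q ∈ t, (c r - c q) with hμ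
    have hμ0 : μ ≠ 0 := by
      rw [hμ]
      refine Finset.prod_ne_zero_iff.mpr fun q hq => sub_ne_zero.mpr fun h => ?_
      have : r = q := hinj r (Finset.mem_insert_self r t) q (Finset.mem_insert_of_mem hq) h
      exact hr (this ▸ hq)
    have hy : μ⁻¹ • B x ∈ LinearMap.ker (f - c r • 1) := by
      rw [LinearMap.mem_ker, LinearMap.sub_apply, LinearMap.smul_apply, Module.End.one_apply,
        map_smul, hBx, smul_comm, sub_self]
    have hBB : B (B x) = μ • B x := by
      have := aeval_apply_of_eq_smul f (c r) (B x) hBx (∏ q ∈ t, (X - C (c q)))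
      rw [← hB] at this
      rw [this, hμ]
      congr 1
      rw [eval_prod]
      exact Finset.prod_congr rfl fun q _ => by rw [eval_sub, eval_X, eval_C]
    have hx' : B (x - μ⁻¹ • B x) = 0 := by
      rw [map_sub, map_smul, hBB, smul_smul, inv_mul_cancel₀ hμ0, one_smul, sub_self]
    have h1 : x - μ⁻¹ • B x ∈ ⨆ q ∈ t, LinearMap.ker (f - c q • 1) :=
      ih (fun q hq r' hr' => hinj q (Finset.mem_insert_of_mem hq) r'
        (Finset.mem_insert_of_mem hr')) _ hx'
    have hle : (⨆ q ∈ t, LinearMap.ker (f - c q • 1)) ≤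
        ⨆ q ∈ insert r t, LinearMap.ker (f - c q • 1) :=
      biSup_mono fun q hq => Finset.mem_insert_of_mem hq
    have hxe : x = (x - μ⁻¹ • B x) + μ⁻¹ • B x := by abel
    rw [hxe]
    exact Submodule.add_mem _ (hle h1)
      (Submodule.mem_iSup_of_mem r (Submodule.mem_iSup_of_mem (Finset.mem_insert_self r t) hy))

end Aux

/-- Let `V` be a finite-dimensional vector space over an algebraically closed field
`k` of characteristic zero with a finite exhaustive increasing filtration `W`.
Suppose `α ∈ kˣ` is not a root of unity and `Φ` is a filtration-preserving
automorphism of `V` which induces multiplication by `α^p` on `Gr^W_p V`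
(i.e. `Φ x - α^p • x ∈ W_{p-1}` for `x ∈ W_p`).  Let `Φ = Φs * Φu` be the
multiplicative Jordan decomposition, with `Φs` semisimple, `Φu` unipotent and
`Φs`, `Φu` commuting.  Then, setting `V_p := Ker (Φs - α^p • id)`, the family
`(V_p)` gives a direct sum decomposition `V = ⊕_p V_p` and
`W_p V = ⊕_{q ≤ p} V_q`; in particular the filtration `W` splits. -/
theorem filtration_splits_of_grading_automorphism
    (k V : Type) [Field k] [CharZero k] [IsAlgClosed k]
    [AddCommGroup V] [Module k V] [FiniteDimensional k V]
    (W : ℤ → Submodule k V) (hmono : Monotone W)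
    (hbot : ∃ a : ℤ, W a = ⊥) (htop : ∃ b : ℤ, W b = ⊤)
    (α : kˣ) (hα : ∀ n : ℕ, n ≠ 0 → α ^ n ≠ 1)
    (Φ : V ≃ₗ[k] V)
    (hΦW : ∀ p : ℤ, ∀ x ∈ W p, Φ x ∈ W p)
    (hgr : ∀ p : ℤ, ∀ x ∈ W p, Φ x - ((α ^ p : kˣ) : k) • x ∈ W (p - 1))
    (Φs Φu : Module.End k V)
    (hs : Φs.IsSemisimple)
    (hu : IsNilpotent (Φu - 1))
    (hcomm : Commute Φs Φu)
    (hdec : (Φ : V →ₗ[k] V) = Φs * Φu) :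
    DirectSum.IsInternal
        (fun p : ℤ =>
          LinearMap.ker (Φs - ((α ^ p : kˣ) : k) • (1 : Module.End k V))) ∧
      ∀ p : ℤ, W p = ⨆ q : ℤ, ⨆ _ : q ≤ p,
        LinearMap.ker (Φs - ((α ^ q : kˣ) : k) • (1 : Module.End k V)) := by
  classical
  obtain ⟨a, ha⟩ := hbot
  obtain ⟨b, hb⟩ := htop
  set c : ℤ → k := fun q => ((α ^ q : kˣ) : k) with hc
  set Φl : Module.End k V := (Φ : V →ₗ[k] V) with hΦl
  -- α^z ≠ 1 for z ≠ 0
  have hαz : ∀ z : ℤ, 0 < z → α ^ z ≠ 1 := by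
    intro z hz h
    exact hα z.toNat (by omega)
      (by rwa [← zpow_natCast, Int.toNat_of_nonneg hz.le])
  have hαz' : ∀ z : ℤ, z ≠ 0 → α ^ z ≠ 1 := by
    intro z hz h
    rcases lt_or_gt_of_ne hz with h4 | h4
    · exact hαz (-z) (by omega) (by rw [zpow_neg, h, inv_one])
    · exact hαz z h4 h
  have hinj : Function.Injective c := by
    intro q r h
    by_contra hne
    have h2 : (α ^ q : kˣ) = α ^ r := Units.ext h
    refine hαz' (q - r) (sub_ne_zero.mpr hne) ?_
    rw [zpow_sub, h2, mul_inv_cancel]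
  -- the basic shifting property
  have hgr' : ∀ p : ℤ, ∀ x ∈ W p, (Φl - c p • 1) x ∈ W (p - 1) := by
    intro p x hx
    have h := hgr p x hx
    have he : (Φl - c p • 1) x = Φ x - c p • x := by
      rw [LinearMap.sub_apply, LinearMap.smul_apply, Module.End.one_apply, hΦl]
      rfl
    rw [he]
    exact h
  -- the chain lemma
  have chain : ∀ n : ℕ, ∀ p : ℤ, ∀ x ∈ W p,
      Polynomial.aeval Φl (∏ i ∈ Finset.range n, (X - C (c (p - i)))) x ∈ W (p - n) := by
    intro n
    induction n with
    | zero => intro p x hx; simpa using hx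
    | succ n ih =>
      intro p x hx
      have h1 : Polynomial.aeval Φl (∏ i ∈ Finset.range (n + 1), (X - C (c (p - i)))) x
          = Polynomial.aeval Φl (∏ i ∈ Finset.range n, (X - C (c ((p - 1) - i))))
              ((Φl - c p • 1) x) := by
        rw [Finset.prod_range_succ', map_mul, Module.End.mul_apply]
        congr 1
        · congr 1
          refine Finset.prod_congr rfl fun i _ => ?_
          congr 3
          push_cast
          ring
        · rw [show ((0 : ℕ) : ℤ) = (0 : ℤ) by norm_num, sub_zero, map_sub, aeval_X, aeval_C,
            Module.algebraMap_end_eq_smul_id]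
          rfl
      rw [h1]
      have h2 := ih (p - 1) _ (hgr' p x hx)
      have h3 : p - 1 - (n : ℤ) = p - ((n : ℕ) + 1 : ℕ) := by push_cast; ring
      rwa [h3] at h2
  -- membership in the sup of kernels
  have key : ∀ p : ℤ, ∀ x ∈ W p,
      x ∈ ⨆ q ∈ Finset.image (fun i : ℕ => p - (i : ℤ)) (Finset.range (p - a).toNat),
        LinearMap.ker (Φl - c q • 1) := by
    intro p x hx
    set n : ℕ := (p - a).toNat with hn
    have himg : ∀ i ∈ Finset.range n, ∀ j ∈ Finset.range n,
        p - (i : ℤ) = p - (j : ℤ) → i = j := by intro i _ j _ h; omega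
    have h0 := chain n p x hx
    have h1 : W (p - (n : ℤ)) ≤ ⊥ := ha ▸ hmono (by omega)
    have h2 : Polynomial.aeval Φl (∏ q ∈ Finset.image (fun i : ℕ => p - (i : ℤ))
        (Finset.range n), (X - C (c q))) x = 0 := by
      rw [Finset.prod_image himg]
      simpa using h1 h0
    refine mem_iSup_ker_of_prod_eq_zero Φl c _ ?_ x h2
    intro q _ r _ h
    exact hinj h
  -- each kernel is contained in W q
  have kerW : ∀ q : ℤ, LinearMap.ker (Φl - c q • 1) ≤ W q := by
    intro q x hx
    rw [LinearMap.mem_ker, LinearMap.sub_apply, LinearMap.smul_apply, Module.End.one_apply,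
      sub_eq_zero] at hx
    have hx' : Φ x = c q • x := hx
    have down : ∀ r : ℤ, q < r → x ∈ W r → x ∈ W (r - 1) := by
      intro r hqr hxr
      have h5 := hgr r x hxr
      rw [hx', ← sub_smul] at h5
      exact (Submodule.smul_mem_iff _
        (sub_ne_zero.mpr fun h => (ne_of_lt hqr) (hinj h))).mp h5
    have hdesc : ∀ m : ℕ, x ∈ W (max q (b - m)) := by
      intro m
      induction m with
      | zero =>
        refine hmono (by omega : b ≤ max q (b - ((0 : ℕ) : ℤ))) ?_
        rw [hb]; trivial
      | succ m ihm =>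
        rcases le_or_gt (b - (m : ℤ)) q with hle | hlt
        · have hmx : max q (b - ((m + 1 : ℕ) : ℤ)) = max q (b - (m : ℤ)) := by push_cast; omega
          rwa [hmx]
        · have hmax : max q (b - (m : ℤ)) = b - (m : ℤ) := by omega
          rw [hmax] at ihm
          have := down (b - m) hlt ihm
          exact hmono (by push_cast; omega) this
    have h7 := hdesc (b - q).toNat
    have h8 : max q (b - ((b - q).toNat : ℤ)) = q := by omega
    rwa [h8] at h7
  -- Φ is semisimple
  have haev : Polynomial.aeval Φl
      (∏ q ∈ Finset.image (fun i : ℕ => b - (i : ℤ)) (Finset.range (b - a).toNat),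
        (X - C (c q))) = 0 := by
    ext x
    have hx : x ∈ W b := by rw [hb]; trivial
    have h0 := chain (b - a).toNat b x hx
    have h1 : W (b - ((b - a).toNat : ℤ)) ≤ ⊥ := ha ▸ hmono (by omega)
    have h2 : ∀ i ∈ Finset.range (b - a).toNat, ∀ j ∈ Finset.range (b - a).toNat,
        b - (i : ℤ) = b - (j : ℤ) → i = j := by intro i _ j _ h; omega
    rw [Finset.prod_image h2]
    simpa using h1 h0
  have hsq : Squarefree (∏ q ∈ Finset.image (fun i : ℕ => b - (i : ℤ))
      (Finset.range (b - a).toNat), (X - C (c q))) := by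
    refine Polynomial.Separable.squarefree ?_
    rw [Polynomial.separable_prod_X_sub_C_iff']
    intro q _ r _ h
    exact hinj h
  have hss : Φl.IsSemisimple := Module.End.isSemisimple_of_squarefree_aeval_eq_zero hsq haev
  -- Φs = Φ
  have hcommls : Commute Φl Φs := by
    have h : Commute Φs (Φs * Φu) := (Commute.refl Φs).mul_right hcomm
    rw [hdec]
    exact h.symm
  have hnil : IsNilpotent (Φl - Φs) := by
    have heq : Φl - Φs = Φs * (Φu - 1) := by
      rw [hdec, mul_sub, mul_one]
    rw [heq]
    exact (hcomm.sub_right (Commute.one_right Φs)).isNilpotent_mul_left hu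
  have hsubss : (Φl - Φs).IsSemisimple :=
    Module.End.IsSemisimple.sub_of_commute hcommls hss hs
  have hΦseq : Φs = Φl := by
    have h0 := Module.End.eq_zero_of_isNilpotent_isSemisimple hnil hsubss
    rw [sub_eq_zero] at h0
    exact h0.symm
  rw [hΦseq]
  -- independence
  have hindep : iSupIndep fun q : ℤ => LinearMap.ker (Φl - c q • 1) := by
    have h0 : iSupIndep fun q : ℤ => Module.End.eigenspace Φl (c q) :=
      (Module.End.eigenspaces_iSupIndep Φl).comp hinj
    have he : (fun q : ℤ => LinearMap.ker (Φl - c q • 1))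
        = fun q : ℤ => Module.End.eigenspace Φl (c q) :=
      funext fun q => (Module.End.eigenspace_def).symm
    rw [he]
    exact h0
  -- sup over all of ℤ is ⊤
  have hsup : (⨆ q : ℤ, LinearMap.ker (Φl - c q • 1)) = ⊤ := by
    rw [eq_top_iff]
    intro x _
    have hx : x ∈ W b := by rw [hb]; trivial
    have h0 := key b x hx
    have hle2 : (⨆ q ∈ Finset.image (fun i : ℕ => b - (i : ℤ)) (Finset.range (b - a).toNat),
        LinearMap.ker (Φl - c q • 1)) ≤ ⨆ q : ℤ, LinearMap.ker (Φl - c q • 1) := by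
      refine iSup₂_le fun q _ => ?_
      exact le_iSup (fun q : ℤ => LinearMap.ker (Φl - c q • 1)) q
    exact hle2 h0
  constructor
  · rw [DirectSum.isInternal_submodule_iff_iSupIndep_and_iSup_eq_top]
    exact ⟨hindep, hsup⟩
  · intro p
    refine le_antisymm ?_ ?_
    · intro x hx
      have h0 := key p x hx
      refine (iSup₂_le fun q hq => ?_ :
        (⨆ q ∈ Finset.image (fun i : ℕ => p - (i : ℤ)) (Finset.range (p - a).toNat),
          LinearMap.ker (Φl - c q • 1)) ≤ _) h0
      have hqp : q ≤ p := by
        obtain ⟨i, _, rfl⟩ := Finset.mem_image.mp hq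
        omega
      exact le_iSup₂ (f := fun (q : ℤ) (_ : q ≤ p) => LinearMap.ker (Φl - c q • 1)) q hqp
    · refine iSup₂_le fun q hq => ?_
      exact (kerW q).trans (hmono hq)
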